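/- Let γ : (0,1] → [0,∞) be measurable with ∫₀¹ s γ(s) ds < ∞, and set M = 2∫₀¹ s² γ(s) ds. Let C : ℝ × ℝ → ℝ be continuously differentiable and symmetric, i.e. C(x,y) = C(y,x) for all x, y, and let σ(t) = C(t,t) (so σ is continuously differentiable). Let x ∈ ℝ and let u : ℝ → ℝ be twice continuously differentiable on a neighborhood of x. Then lim_{δ→0⁺} δ^{-3} ∫_{x−δ}^{x+δ} C(x,y) γ(|y−x|/δ) (u(y) − u(x)) dy = (M/2) · (σ(x) u''(x) + σ'(x) u'(x)), i.e. (M/2) times the divergence-form operator (σ u')'(x). -/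

import Mathlib

open MeasureTheory Filter Set
open scoped Topology

lemma aux_mem_uIcc_abs {w t : ℝ} (ht : t ∈ Set.uIcc 0 w) : |t| ≤ |w| := by
  rcases le_total 0 w with h | h
  · rw [Set.uIcc_of_le h] at ht
    rw [abs_of_nonneg ht.1, abs_of_nonneg h]; exact ht.2
  · rw [Set.uIcc_of_ge h] at ht
    rw [abs_of_nonpos ht.2, abs_of_nonpos h]; linarith [ht.1]

lemma aux_lip {u : ℝ → ℝ} {x ε L : ℝ}
    (hud : ∀ y ∈ Set.Ioo (x - ε) (x + ε), HasDerivAt u (deriv u y) y)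
    (hL : ∀ y ∈ Set.Ioo (x - ε) (x + ε), |deriv u y| ≤ L) :
    ∀ y : ℝ, |y - x| < ε → |u y - u x| ≤ L * |y - x| := by
  intro y hy
  have hsub : Set.uIcc x y ⊆ Set.Ioo (x - ε) (x + ε) := by
    intro t ht
    have h1 : |t - x| ≤ |y - x| := by
      have : t - x ∈ Set.uIcc 0 (y - x) := by
        rcases le_total x y with h | h
        · rw [Set.uIcc_of_le h] at ht; rw [Set.uIcc_of_le (by linarith)]
          exact ⟨by linarith [ht.1], by linarith [ht.2]⟩
        · rw [Set.uIcc_of_ge h] at ht; rw [Set.uIcc_of_ge (by linarith)]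
          exact ⟨by linarith [ht.1], by linarith [ht.2]⟩
      exact aux_mem_uIcc_abs this
    have h2 : |t - x| < ε := lt_of_le_of_lt h1 hy
    rw [abs_lt] at h2
    exact ⟨by linarith [h2.1], by linarith [h2.2]⟩
  have := Convex.norm_image_sub_le_of_norm_hasDerivWithin_le
    (f := u) (f' := deriv u)
    (fun t ht => (hud t (hsub ht)).hasDerivWithinAt) (fun t ht => hL t (hsub ht))
    (convex_uIcc x y) Set.left_mem_uIcc Set.right_mem_uIcc
  simpa [Real.norm_eq_abs] using this

lemma aux_D {u : ℝ → ℝ} {x ε : ℝ} (hε : 0 < ε)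
    (hud : ∀ y ∈ Set.Ioo (x - ε) (x + ε), HasDerivAt u (deriv u y) y)
    (hv : HasDerivAt (deriv u) (deriv (deriv u) x) x)
    {η : ℝ} (hη : 0 < η) :
    ∃ ρ > 0, ρ ≤ ε ∧ ∀ h : ℝ, |h| < ρ →
      |u (x + h) + u (x + -h) - 2 * u x - h ^ 2 * deriv (deriv u) x| ≤ η * h ^ 2 := by
  set v := deriv u with hvdef
  set A := deriv (deriv u) x with hA
  have hsl : Tendsto (slope v x) (𝓝[≠] x) (𝓝 A) := hasDerivAt_iff_tendsto_slope.1 hv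
  have hev : ∀ᶠ y in 𝓝[≠] x, |slope v x y - A| < η / 2 := by
    have := Metric.tendsto_nhds.1 hsl (η / 2) (by positivity)
    simpa [Real.dist_eq] using this
  rw [Filter.eventually_iff, Metric.mem_nhdsWithin_iff] at hev
  obtain ⟨ρ₀, hρ₀, hball⟩ := hev
  refine ⟨min ρ₀ ε, by positivity, min_le_right _ _, ?_⟩
  have key : ∀ t : ℝ, |t| < min ρ₀ ε → |v (x + t) - v x - t * A| ≤ η / 2 * |t| := by
    intro t ht
    rcases eq_or_ne t 0 with rfl | ht0
    · simp
    · have hmem : (x + t) ∈ Metric.ball x ρ₀ ∩ {x}ᶜ := by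
        constructor
        · rw [Metric.mem_ball, Real.dist_eq, add_sub_cancel_left]
          exact lt_of_lt_of_le ht (min_le_left _ _)
        · simp only [Set.mem_compl_iff, Set.mem_singleton_iff]
          intro hc; exact ht0 (by linarith)
      have hb := hball hmem
      simp only [Set.mem_setOf_eq] at hb
      have hslope : slope v x (x + t) = (v (x + t) - v x) / t := by
        rw [slope_def_field, add_sub_cancel_left]
      rw [hslope] at hb
      have e : v (x + t) - v x - t * A = t * ((v (x + t) - v x) / t - A) := by
        field_simp
      rw [e, abs_mul, mul_comm]
      exact mul_le_mul_of_nonneg_right hb.le (abs_nonneg _)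
  have hPb : ∀ w : ℝ, |w| < min ρ₀ ε →
      |u (x + w) - u x - w * v x - w ^ 2 / 2 * A| ≤ η / 2 * w ^ 2 := by
    intro w hw
    set P : ℝ → ℝ := fun t => u (x + t) - u x - t * v x - t ^ 2 / 2 * A with hP
    have hderiv : ∀ t ∈ Set.uIcc 0 w,
        HasDerivWithinAt P (v (x + t) - v x - t * A) (Set.uIcc 0 w) t := by
      intro t ht
      have htw : |t| ≤ |w| := aux_mem_uIcc_abs ht
      have hxt : x + t ∈ Set.Ioo (x - ε) (x + ε) := by
        have h2 : |t| < ε := lt_of_le_of_lt htw (lt_of_lt_of_le hw (min_le_right _ _))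
        rw [abs_lt] at h2
        exact ⟨by linarith [h2.1], by linarith [h2.2]⟩
      have h1 : HasDerivAt (fun t : ℝ => u (x + t)) (v (x + t)) t := by
        have := (hud _ hxt).comp t ((hasDerivAt_id t).const_add x)
        rw [mul_one] at this; exact this
      have h2 : HasDerivAt P (v (x + t) - v x - t * A) t := by
        have h3 := ((h1.sub_const (u x)).sub ((hasDerivAt_id t).mul_const (v x))).sub
          (((hasDerivAt_pow 2 t).div_const 2).mul_const A)
        have e : v (x + t) - v x - t * A = v (x + t) - 1 * v x - ((2 : ℕ) : ℝ) * t ^ (2 - 1) / 2 * A := by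
          rw [show (2:ℕ) - 1 = 1 from rfl]; push_cast; ring
        rw [e]; exact h3
      exact h2.hasDerivWithinAt
    have hbound : ∀ t ∈ Set.uIcc 0 w, ‖v (x + t) - v x - t * A‖ ≤ η / 2 * |w| := by
      intro t ht
      have htw : |t| ≤ |w| := aux_mem_uIcc_abs ht
      have := key t (lt_of_le_of_lt htw hw)
      rw [Real.norm_eq_abs]
      refine this.trans ?_
      exact mul_le_mul_of_nonneg_left htw (by positivity)
    have hmvt := Convex.norm_image_sub_le_of_norm_hasDerivWithin_le hderiv hbound
      (convex_uIcc 0 w) Set.left_mem_uIcc Set.right_mem_uIcc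
    have hP0 : P 0 = 0 := by simp [hP]
    rw [hP0, sub_zero, sub_zero, Real.norm_eq_abs, Real.norm_eq_abs] at hmvt
    have : η / 2 * |w| * |w| = η / 2 * w ^ 2 := by
      rw [mul_assoc, abs_mul_abs_self]; ring
    simpa [hP, this] using hmvt
  intro h hh
  have h1 := hPb h hh
  have h2 := hPb (-h) (by rwa [abs_neg])
  have e : u (x + h) + u (x + -h) - 2 * u x - h ^ 2 * A =
      (u (x + h) - u x - h * v x - h ^ 2 / 2 * A) +
      (u (x + -h) - u x - (-h) * v x - (-h) ^ 2 / 2 * A) := by ring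
  rw [e]
  have := abs_add_le (u (x + h) - u x - h * v x - h ^ 2 / 2 * A)
    (u (x + -h) - u x - (-h) * v x - (-h) ^ 2 / 2 * A)
  refine this.trans ?_
  have h2' : |u (x + -h) - u x - (-h) * v x - (-h) ^ 2 / 2 * A| ≤ η / 2 * h ^ 2 := by
    have : (-h) ^ 2 = h ^ 2 := by ring
    rw [this] at h2 ⊢
    exact h2
  linarith

set_option maxHeartbeats 4000000 in
theorem stmt_1 (γ : ℝ → ℝ) (hγmeas : Measurable γ)
    (hγnonneg : ∀ s ∈ Set.Ioc (0 : ℝ) 1, 0 ≤ γ s)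
    (hint : IntegrableOn (fun s : ℝ => s * γ s) (Set.Ioc 0 1))
    (M : ℝ) (hM : M = 2 * ∫ s in Set.Ioc (0 : ℝ) 1, s ^ 2 * γ s)
    (C : ℝ → ℝ → ℝ) (hC : ContDiff ℝ 1 (fun p : ℝ × ℝ => C p.1 p.2))
    (hCsym : ∀ x y : ℝ, C x y = C y x)
    (σ : ℝ → ℝ) (hσ : ∀ t : ℝ, σ t = C t t)
    (x : ℝ) (u : ℝ → ℝ)
    (s : Set ℝ) (hs : s ∈ nhds x) (hu : ContDiffOn ℝ 2 u s) :
    Filter.Tendsto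
      (fun δ : ℝ =>
        (δ ^ 3)⁻¹ * ∫ y in (x - δ)..(x + δ), C x y * γ (|y - x| / δ) * (u y - u x))
      (nhdsWithin 0 (Set.Ioi 0))
      (nhds ((M / 2) * (σ x * deriv (deriv u) x + deriv σ x * deriv u x))) := by
  have hσf : σ = fun t => C t t := funext hσ
  subst hσf
  -- neighborhood of x where u is C²
  obtain ⟨ε, hε, hball⟩ := Metric.mem_nhds_iff.1 hs
  rw [Real.ball_eq_Ioo] at hball
  have hBo : IsOpen (Set.Ioo (x - ε) (x + ε)) := isOpen_Ioo
  have hxB : x ∈ Set.Ioo (x - ε) (x + ε) := by constructor <;> linarith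
  have huB : ContDiffOn ℝ 2 u (Set.Ioo (x - ε) (x + ε)) := hu.mono hball
  have hucont : ContinuousOn u (Set.Ioo (x - ε) (x + ε)) := huB.continuousOn
  have hud : ∀ y ∈ Set.Ioo (x - ε) (x + ε), HasDerivAt u (deriv u y) y := fun y hy =>
    ((huB.contDiffAt (hBo.mem_nhds hy)).differentiableAt (by norm_num)).hasDerivAt
  have hvC : ContDiffOn ℝ 1 (deriv u) (Set.Ioo (x - ε) (x + ε)) :=
    huB.deriv_of_isOpen hBo (by norm_num)
  have hv'x : HasDerivAt (deriv u) (deriv (deriv u) x) x :=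
    ((hvC.contDiffAt (hBo.mem_nhds hxB)).differentiableAt one_ne_zero).hasDerivAt
  -- derivatives of C
  set L : ℝ × ℝ →L[ℝ] ℝ := fderiv ℝ (fun p : ℝ × ℝ => C p.1 p.2) (x, x) with hLdef
  have hFd : HasFDerivAt (fun p : ℝ × ℝ => C p.1 p.2) L (x, x) :=
    ((hC.differentiable one_ne_zero) (x, x)).hasFDerivAt
  have hζd : HasDerivAt (fun y => C x y) (L (0, 1)) x := by
    have hg : HasDerivAt (fun y : ℝ => ((x : ℝ), y)) ((0 : ℝ), (1 : ℝ)) x :=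
      (hasDerivAt_const x x).prodMk (hasDerivAt_id x)
    exact hFd.comp_hasDerivAt_of_eq x hg rfl
  have hξd : HasDerivAt (fun y => C y x) (L (1, 0)) x := by
    have hg : HasDerivAt (fun y : ℝ => (y, (x : ℝ))) ((1 : ℝ), (0 : ℝ)) x :=
      (hasDerivAt_id x).prodMk (hasDerivAt_const x x)
    exact hFd.comp_hasDerivAt_of_eq x hg rfl
  have hLL : L (1, 0) = L (0, 1) := by
    have h1 : HasDerivAt (fun y => C x y) (L (1, 0)) x := by
      have he : (fun y => C y x) = fun y => C x y := funext fun y => hCsym y x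
      rwa [he] at hξd
    exact h1.unique hζd
  have hσd : HasDerivAt (fun t => C t t) (2 * L (0, 1)) x := by
    have hg : HasDerivAt (fun t : ℝ => ((t : ℝ), (t : ℝ))) ((1 : ℝ), (1 : ℝ)) x :=
      (hasDerivAt_id x).prodMk (hasDerivAt_id x)
    have hcomp := hFd.comp_hasDerivAt_of_eq x hg rfl
    have h11 : L (1, 1) = 2 * L (0, 1) := by
      have he : ((1 : ℝ), (1 : ℝ)) = ((1 : ℝ), (0 : ℝ)) + ((0 : ℝ), (1 : ℝ)) := by simp
      rw [he, map_add, hLL]; ring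
    rwa [h11] at hcomp
  -- continuity of y ↦ C x y
  have hζcont : Continuous (fun y => C x y) :=
    hC.continuous.comp (continuous_const.prodMk continuous_id)
  -- bound on C x y near x
  set B₁ : ℝ := |C x x| + 1 with hB₁def
  have hB₁pos : 0 < B₁ := by positivity
  obtain ⟨ρ₃, hρ₃, hB⟩ : ∃ ρ₃ > 0, ∀ y : ℝ, |y - x| < ρ₃ → |C x y| ≤ B₁ := by
    obtain ⟨ρ₃, h1, h2⟩ := Metric.continuousAt_iff.1 hζcont.continuousAt 1 one_pos
    refine ⟨ρ₃, h1, fun y hy => ?_⟩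
    have := h2 (show dist y x < ρ₃ by rwa [Real.dist_eq])
    rw [Real.dist_eq] at this
    have h3 := abs_sub_abs_le_abs_sub (C x y) (C x x)
    rw [hB₁def]; linarith
  -- Lipschitz bound on C x · near x
  have hζC : ContDiff ℝ 1 (fun y => C x y) :=
    hC.comp (contDiff_const.prodMk contDiff_id)
  obtain ⟨K, t₀, ht₀, hKlip⟩ := hζC.contDiffAt.exists_lipschitzOnWith
  obtain ⟨ρ₂, hρ₂, hball₂⟩ := Metric.mem_nhds_iff.1 ht₀
  have hLip : ∀ y : ℝ, |y - x| < ρ₂ → |C x y - C x x| ≤ (K : ℝ) * |y - x| := by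
    intro y hy
    have h1 : y ∈ t₀ := hball₂ (by rwa [Metric.mem_ball, Real.dist_eq])
    have h2 : x ∈ t₀ := hball₂ (Metric.mem_ball_self hρ₂)
    have := hKlip.dist_le_mul y h1 x h2
    rwa [Real.dist_eq, Real.dist_eq] at this
  -- local Lipschitz bound on u near x
  have hvx : ContinuousAt (deriv u) x := hv'x.differentiableAt.continuousAt
  obtain ⟨ρ₁', hρ₁', hv1⟩ := Metric.continuousAt_iff.1 hvx 1 one_pos
  set L₁ : ℝ := |deriv u x| + 1 with hL₁def
  have hL₁pos : 0 < L₁ := by positivity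
  set ρ₁ : ℝ := min ρ₁' ε with hρ₁def
  have hρ₁pos : 0 < ρ₁ := lt_min hρ₁' hε
  have hρ₁ε : ρ₁ ≤ ε := min_le_right _ _
  have hLu : ∀ y : ℝ, |y - x| < ρ₁ → |u y - u x| ≤ L₁ * |y - x| := by
    have hsub : Set.Ioo (x - ρ₁) (x + ρ₁) ⊆ Set.Ioo (x - ε) (x + ε) := by
      intro z hz; exact ⟨by linarith [hz.1, hρ₁ε], by linarith [hz.2, hρ₁ε]⟩
    apply aux_lip (fun z hz => hud z (hsub hz))
    intro z hz
    have hzd : dist z x < ρ₁' := by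
      rw [Real.dist_eq, abs_lt]
      constructor
      · linarith [hz.1, min_le_left ρ₁' ε]
      · linarith [hz.2, min_le_left ρ₁' ε]
    have := hv1 hzd
    rw [Real.dist_eq] at this
    have h3 := abs_sub_abs_le_abs_sub (deriv u z) (deriv u x)
    rw [hL₁def]; linarith
  -- G
  set G : ℝ → ℝ := fun h =>
    C x (x + h) * (u (x + h) - u x) + C x (x + -h) * (u (x + -h) - u x) with hG
  -- uniform bound on G
  obtain ⟨ρD, hρD, hρDε, hD1⟩ := aux_D hε hud hv'x one_pos
  set K₀ : ℝ := 2 * (K : ℝ) * L₁ + B₁ * (1 + |deriv (deriv u) x|) with hK₀def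
  have hK₀nn : 0 ≤ K₀ := by positivity
  set ρG : ℝ := min (min ρ₁ ρ₂) ρD with hρGdef
  have hρGpos : 0 < ρG := lt_min (lt_min hρ₁pos hρ₂) hρD
  have hGbd : ∀ h : ℝ, |h| < ρG → |G h| ≤ K₀ * h ^ 2 := by
    intro h hh
    have hh1 : |h| < ρ₁ := lt_of_lt_of_le hh ((min_le_left _ _).trans (min_le_left _ _))
    have hh2 : |h| < ρ₂ := lt_of_lt_of_le hh ((min_le_left _ _).trans (min_le_right _ _))
    have hhD : |h| < ρD := lt_of_lt_of_le hh (min_le_right _ _)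
    have ea : |(x + h) - x| = |h| := by rw [add_sub_cancel_left]
    have eb : |(x + -h) - x| = |h| := by rw [add_sub_cancel_left, abs_neg]
    have e1 : |C x (x + h) - C x x| ≤ (K : ℝ) * |h| := by
      have := hLip (x + h) (by rwa [ea]); rwa [ea] at this
    have e1' : |C x (x + -h) - C x x| ≤ (K : ℝ) * |h| := by
      have := hLip (x + -h) (by rwa [eb]); rwa [eb] at this
    have e2 : |u (x + h) - u x| ≤ L₁ * |h| := by
      have := hLu (x + h) (by rwa [ea]); rwa [ea] at this
    have e2' : |u (x + -h) - u x| ≤ L₁ * |h| := by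
      have := hLu (x + -h) (by rwa [eb]); rwa [eb] at this
    have e3 : |u (x + h) + u (x + -h) - 2 * u x| ≤ (1 + |deriv (deriv u) x|) * h ^ 2 := by
      have h4 := hD1 h hhD
      have h5 : |u (x + h) + u (x + -h) - 2 * u x| ≤
          |u (x + h) + u (x + -h) - 2 * u x - h ^ 2 * deriv (deriv u) x| +
          |h ^ 2 * deriv (deriv u) x| := by
        have h7 := abs_add_le (u (x + h) + u (x + -h) - 2 * u x - h ^ 2 * deriv (deriv u) x)
          (h ^ 2 * deriv (deriv u) x)
        simpa using h7
      have h6 : |h ^ 2 * deriv (deriv u) x| = h ^ 2 * |deriv (deriv u) x| := by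
        rw [abs_mul, abs_of_nonneg (sq_nonneg h)]
      nlinarith [sq_nonneg h]
    have hdecomp : G h = (C x (x + h) - C x x) * (u (x + h) - u x)
        + (C x (x + -h) - C x x) * (u (x + -h) - u x)
        + C x x * (u (x + h) + u (x + -h) - 2 * u x) := by
      simp only [hG]; ring
    have hCxx : |C x x| ≤ B₁ := by rw [hB₁def]; linarith
    have hhh : |h| * |h| = h ^ 2 := by rw [abs_mul_abs_self]; ring
    have t1 : |(C x (x + h) - C x x) * (u (x + h) - u x)| ≤ ((K : ℝ) * |h|) * (L₁ * |h|) := by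
      rw [abs_mul]
      exact mul_le_mul e1 e2 (abs_nonneg _) (by positivity)
    have t2 : |(C x (x + -h) - C x x) * (u (x + -h) - u x)| ≤ ((K : ℝ) * |h|) * (L₁ * |h|) := by
      rw [abs_mul]
      exact mul_le_mul e1' e2' (abs_nonneg _) (by positivity)
    have t3 : |C x x * (u (x + h) + u (x + -h) - 2 * u x)| ≤
        B₁ * ((1 + |deriv (deriv u) x|) * h ^ 2) := by
      rw [abs_mul]
      exact mul_le_mul hCxx e3 (abs_nonneg _) hB₁pos.le
    have t1' : ((K : ℝ) * |h|) * (L₁ * |h|) = (K : ℝ) * L₁ * h ^ 2 := by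
      rw [← hhh]; ring
    have habs2 := abs_add_le ((C x (x + h) - C x x) * (u (x + h) - u x))
      ((C x (x + -h) - C x x) * (u (x + -h) - u x))
    have habs3 := abs_add_le ((C x (x + h) - C x x) * (u (x + h) - u x)
      + (C x (x + -h) - C x x) * (u (x + -h) - u x))
      (C x x * (u (x + h) + u (x + -h) - 2 * u x))
    rw [hdecomp, hK₀def]
    linarith
  -- the pointwise limit of G h / h²
  set A2 : ℝ := C x x * deriv (deriv u) x + 2 * L (0, 1) * deriv u x with hA2def
  have hmap : Filter.Tendsto (fun h : ℝ => x + h) (𝓝[≠] (0 : ℝ)) (𝓝[≠] x) := by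
    apply tendsto_nhdsWithin_of_tendsto_nhds_of_eventually_within
    · exact ((continuous_const.add continuous_id).tendsto' 0 x (by simp)).mono_left
        nhdsWithin_le_nhds
    · filter_upwards [self_mem_nhdsWithin] with h hh
      simp only [Set.mem_compl_iff, Set.mem_singleton_iff] at hh ⊢
      intro hc; exact hh (by linarith)
  have hT1 : Filter.Tendsto (fun h : ℝ => (C x (x + h) - C x x) / h) (𝓝[≠] (0 : ℝ))
      (𝓝 (L (0, 1))) := by
    have h7 := (hasDerivAt_iff_tendsto_slope.1 hζd).comp hmap
    apply h7.congr
    intro h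
    simp [Function.comp, slope_def_field, add_sub_cancel_left]
  have hT2 : Filter.Tendsto (fun h : ℝ => (u (x + h) - u x) / h) (𝓝[≠] (0 : ℝ))
      (𝓝 (deriv u x)) := by
    have h7 := (hasDerivAt_iff_tendsto_slope.1 (hud x hxB)).comp hmap
    apply h7.congr
    intro h
    simp [Function.comp, slope_def_field, add_sub_cancel_left]
  have hT3 : Filter.Tendsto (fun h : ℝ => (u (x + h) + u (x + -h) - 2 * u x) / h ^ 2)
      (𝓝[≠] (0 : ℝ)) (𝓝 (deriv (deriv u) x)) := by
    rw [Metric.tendsto_nhdsWithin_nhds]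
    intro η hη
    obtain ⟨ρ, hρ, -, hD⟩ := aux_D hε hud hv'x (half_pos hη)
    refine ⟨ρ, hρ, fun {h} hh hdist => ?_⟩
    have hh0 : h ≠ 0 := hh
    rw [Real.dist_eq, sub_zero] at hdist
    have hDh := hD h hdist
    have hsq : (0 : ℝ) < h ^ 2 := by positivity
    rw [Real.dist_eq]
    have e : (u (x + h) + u (x + -h) - 2 * u x) / h ^ 2 - deriv (deriv u) x =
        (u (x + h) + u (x + -h) - 2 * u x - h ^ 2 * deriv (deriv u) x) / h ^ 2 := by
      field_simp
    rw [e, abs_div, abs_of_pos hsq, div_lt_iff₀ hsq]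
    nlinarith
  have hneg : Filter.Tendsto (fun h : ℝ => -h) (𝓝[≠] (0 : ℝ)) (𝓝[≠] (0 : ℝ)) := by
    apply tendsto_nhdsWithin_of_tendsto_nhds_of_eventually_within
    · exact (continuous_neg.tendsto' 0 0 (by simp)).mono_left nhdsWithin_le_nhds
    · filter_upwards [self_mem_nhdsWithin] with h hh
      simp only [Set.mem_compl_iff, Set.mem_singleton_iff] at hh ⊢
      intro hc; exact hh (by linarith)
  have hT1n : Filter.Tendsto (fun h : ℝ => (C x (x + -h) - C x x) / (-h)) (𝓝[≠] (0 : ℝ))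
      (𝓝 (L (0, 1))) := by
    have h7 := hT1.comp hneg
    apply h7.congr
    intro h; simp [Function.comp]
  have hT2n : Filter.Tendsto (fun h : ℝ => (u (x + -h) - u x) / (-h)) (𝓝[≠] (0 : ℝ))
      (𝓝 (deriv u x)) := by
    have h7 := hT2.comp hneg
    apply h7.congr
    intro h; simp [Function.comp]
  have hGlim : Filter.Tendsto (fun h : ℝ => G h / h ^ 2) (𝓝[≠] (0 : ℝ)) (𝓝 A2) := by
    have hsum := ((hT1.mul hT2).add (hT1n.mul hT2n)).add (hT3.const_mul (C x x))
    rw [show L (0, 1) * deriv u x + L (0, 1) * deriv u x + C x x * deriv (deriv u) x = A2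
      from by rw [hA2def]; ring] at hsum
    apply hsum.congr'
    filter_upwards [self_mem_nhdsWithin] with h hh
    have h0 : h ≠ 0 := hh
    simp only [hG]
    field_simp
    ring
  -- pointwise limit for each s'
  have hpt : ∀ s' ∈ Set.Ioc (0 : ℝ) 1, Filter.Tendsto
      (fun δ : ℝ => (δ ^ 2)⁻¹ * (γ s' * G (δ * s'))) (𝓝[>] (0 : ℝ))
      (𝓝 (γ s' * (s' ^ 2 * A2))) := by
    intro s' hs'
    have hs'0 : 0 < s' := hs'.1
    have hmul : Filter.Tendsto (fun δ : ℝ => δ * s') (𝓝[>] (0 : ℝ)) (𝓝[≠] (0 : ℝ)) := by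
      apply tendsto_nhdsWithin_of_tendsto_nhds_of_eventually_within
      · have h1 : Filter.Tendsto (fun δ : ℝ => δ * s') (𝓝 0) (𝓝 0) :=
          (continuous_id.mul continuous_const).tendsto' 0 0 (by simp)
        exact h1.mono_left nhdsWithin_le_nhds
      · filter_upwards [self_mem_nhdsWithin] with δ hδ
        simp only [Set.mem_compl_iff, Set.mem_singleton_iff]
        exact (mul_pos hδ hs'0).ne'
    have hcm := (hGlim.comp hmul).const_mul (γ s' * s' ^ 2)
    rw [show γ s' * (s' ^ 2 * A2) = γ s' * s' ^ 2 * A2 from by ring]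
    apply hcm.congr'
    filter_upwards [self_mem_nhdsWithin] with δ hδ
    have hδ0 : (0 : ℝ) < δ := hδ
    simp only [Function.comp]
    field_simp
  -- radius for the change of variables
  set r : ℝ := min ρG (min ρ₃ (min ε 1)) with hrdef
  have hr0 : 0 < r := lt_min hρGpos (lt_min hρ₃ (lt_min hε one_pos))
  have hrρG : r ≤ ρG := min_le_left _ _
  have hrρ₃ : r ≤ ρ₃ := (min_le_right _ _).trans (min_le_left _ _)
  have hrε : r ≤ ε := (min_le_right _ _).trans ((min_le_right _ _).trans (min_le_left _ _))
  have hr1 : r ≤ 1 := (min_le_right _ _).trans ((min_le_right _ _).trans (min_le_right _ _))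
  have hrρ₁ : r ≤ ρ₁ := hrρG.trans ((min_le_left _ _).trans (min_le_left _ _))
  -- main integral identity
  have key : ∀ δ : ℝ, δ ∈ Set.Ioo (0 : ℝ) r →
      (δ ^ 3)⁻¹ * ∫ y in (x - δ)..(x + δ), C x y * γ (|y - x| / δ) * (u y - u x)
      = ∫ s' in Set.Ioc (0 : ℝ) 1, (δ ^ 2)⁻¹ * (γ s' * G (δ * s')) := by
    intro δ hδmem
    obtain ⟨hδ0, hδr⟩ := hδmem
    set g : ℝ → ℝ := fun s' => C x (δ * s' + x) * γ |s'| * (u (δ * s' + x) - u x) with hg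
    have hδ1 : δ ≤ 1 := le_of_lt (lt_of_lt_of_le hδr hr1)
    have hδε : δ < ε := lt_of_lt_of_le hδr hrε
    -- change of variables
    have h1 : (∫ s' in (-1 : ℝ)..1,
          C x (δ * s' + x) * γ (|δ * s' + x - x| / δ) * (u (δ * s' + x) - u x))
        = δ⁻¹ • ∫ y in (x - δ)..(x + δ), C x y * γ (|y - x| / δ) * (u y - u x) := by
      have h := intervalIntegral.integral_comp_mul_add (a := (-1 : ℝ)) (b := 1)
        (f := fun y => C x y * γ (|y - x| / δ) * (u y - u x)) hδ0.ne' x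
      rw [show δ * (-1) + x = x - δ by ring, show δ * 1 + x = x + δ by ring] at h
      exact h
    have h2 : (∫ s' in (-1 : ℝ)..1,
          C x (δ * s' + x) * γ (|δ * s' + x - x| / δ) * (u (δ * s' + x) - u x))
        = ∫ s' in (-1 : ℝ)..1, g s' := by
      apply intervalIntegral.integral_congr
      intro s' _
      simp only [hg]
      rw [add_sub_cancel_right, abs_mul, abs_of_pos hδ0, mul_comm δ |s'|, mul_div_assoc,
        div_self hδ0.ne', mul_one]
    -- measurability of g
    have haesm : ∀ J : Set ℝ, MeasurableSet J → J ⊆ Set.Icc (-1 : ℝ) 1 →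
        AEStronglyMeasurable g (volume.restrict J) := by
      intro J hJm hJsub
      have c0 : Continuous (fun s' : ℝ => δ * s' + x) :=
        (continuous_const.mul continuous_id).add continuous_const
      have c1 : Continuous (fun s' : ℝ => C x (δ * s' + x)) := hζcont.comp c0
      have c2 : ContinuousOn (fun s' : ℝ => u (δ * s' + x)) (Set.Icc (-1 : ℝ) 1) := by
        apply hucont.comp ((continuous_const.mul continuous_id).add continuous_const).continuousOn
        intro s' hs'
        have h4 : |s'| ≤ 1 := abs_le.2 ⟨hs'.1, hs'.2⟩
        have h3 : |δ * s'| < ε := by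
          rw [abs_mul, abs_of_pos hδ0]
          calc δ * |s'| ≤ δ * 1 := mul_le_mul_of_nonneg_left h4 hδ0.le
            _ < ε := by linarith
        rw [abs_lt] at h3
        show δ * s' + x ∈ Set.Ioo (x - ε) (x + ε)
        constructor
        · linarith [h3.1]
        · linarith [h3.2]
      have m1 : AEStronglyMeasurable (fun s' : ℝ => C x (δ * s' + x) * γ |s'|)
          (volume.restrict J) :=
        c1.aestronglyMeasurable.mul (hγmeas.comp measurable_abs).aestronglyMeasurable
      exact m1.mul (((c2.mono hJsub).sub continuousOn_const).aestronglyMeasurable hJm)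
    -- integrability of g on (0,1]
    have hbound1 : IntegrableOn g (Set.Ioc 0 1) := by
      apply Integrable.mono' (hint.const_mul (B₁ * L₁))
        (haesm _ measurableSet_Ioc (fun z hz => ⟨by linarith [hz.1], hz.2⟩))
      rw [ae_restrict_iff' measurableSet_Ioc]
      apply ae_of_all
      intro s' hs'
      have hs'0 : 0 < s' := hs'.1
      have hy : |δ * s' + x - x| = δ * s' := by
        rw [add_sub_cancel_right, abs_mul, abs_of_pos hδ0, abs_of_pos hs'0]
      have hds : δ * s' ≤ δ := by
        calc δ * s' ≤ δ * 1 := mul_le_mul_of_nonneg_left hs'.2 hδ0.le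
          _ = δ := mul_one δ
      have hyρ₁ : |δ * s' + x - x| < ρ₁ := by
        rw [hy]; have := lt_of_lt_of_le hδr hrρ₁; linarith
      have hyρ₃ : |δ * s' + x - x| < ρ₃ := by
        rw [hy]; have := lt_of_lt_of_le hδr hrρ₃; linarith
      have e1 : |C x (δ * s' + x)| ≤ B₁ := hB _ hyρ₃
      have e2 : |u (δ * s' + x) - u x| ≤ L₁ * (δ * s') := by
        have h8 := hLu _ hyρ₁; rwa [hy] at h8
      have hγs : 0 ≤ γ s' := hγnonneg s' hs'
      rw [Real.norm_eq_abs]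
      simp only [hg]
      rw [abs_of_pos hs'0, abs_mul, abs_mul, abs_of_nonneg hγs]
      calc |C x (δ * s' + x)| * γ s' * |u (δ * s' + x) - u x|
          ≤ B₁ * γ s' * (L₁ * (δ * s')) := by
            apply mul_le_mul (mul_le_mul e1 le_rfl hγs hB₁pos.le) e2 (abs_nonneg _) ?_
            positivity
        _ = B₁ * L₁ * (s' * γ s') * δ := by ring
        _ ≤ B₁ * L₁ * (s' * γ s') * 1 := by
            apply mul_le_mul_of_nonneg_left hδ1
            exact mul_nonneg (mul_nonneg hB₁pos.le hL₁pos.le) (mul_nonneg hs'0.le hγs)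
        _ = B₁ * L₁ * (s' * γ s') := mul_one _
    -- integrability of g on (-1,0]
    have hwn' : IntegrableOn (fun s' : ℝ => -s' * γ (-s')) (Set.Ioc (-1 : ℝ) 0) := by
      have hw : IntervalIntegrable (fun s' : ℝ => s' * γ s') volume 0 1 := by
        rw [intervalIntegrable_iff, Set.uIoc_of_le zero_le_one]; exact hint
      have hwn : IntervalIntegrable (fun s' : ℝ => -s' * γ (-s')) volume (-1) 0 := by
        have h5 := (IntervalIntegrable.iff_comp_neg (f := fun s' : ℝ => s' * γ s') (a := 0) (b := 1)).1 hw
        have h6 := h5.symm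
        simpa using h6
      rw [intervalIntegrable_iff, Set.uIoc_of_le (by norm_num : (-1 : ℝ) ≤ 0)] at hwn
      exact hwn
    have hbound2 : IntegrableOn g (Set.Ioc (-1) 0) := by
      apply Integrable.mono' (hwn'.const_mul (B₁ * L₁))
        (haesm _ measurableSet_Ioc (fun z hz => ⟨le_of_lt hz.1, by linarith [hz.2]⟩))
      rw [ae_restrict_iff' measurableSet_Ioc]
      apply ae_of_all
      intro s' hs'
      rcases eq_or_lt_of_le hs'.2 with h0 | hneg'
      · rw [h0]
        simp [hg]
      · have hs'm : (0 : ℝ) < -s' := by linarith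
        have hs'm1 : -s' ≤ 1 := by linarith [hs'.1]
        have hγs : 0 ≤ γ (-s') := hγnonneg (-s') ⟨hs'm, hs'm1⟩
        have hy : |δ * s' + x - x| = δ * -s' := by
          rw [add_sub_cancel_right, abs_mul, abs_of_pos hδ0, abs_of_neg hneg']
        have hds : δ * -s' ≤ δ := by
          calc δ * -s' ≤ δ * 1 := mul_le_mul_of_nonneg_left hs'm1 hδ0.le
            _ = δ := mul_one δ
        have hyρ₁ : |δ * s' + x - x| < ρ₁ := by
          rw [hy]; have := lt_of_lt_of_le hδr hrρ₁; linarith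
        have hyρ₃ : |δ * s' + x - x| < ρ₃ := by
          rw [hy]; have := lt_of_lt_of_le hδr hrρ₃; linarith
        have e1 : |C x (δ * s' + x)| ≤ B₁ := hB _ hyρ₃
        have e2 : |u (δ * s' + x) - u x| ≤ L₁ * (δ * -s') := by
          have h8 := hLu _ hyρ₁; rwa [hy] at h8
        rw [Real.norm_eq_abs]
        simp only [hg]
        rw [abs_of_neg hneg', abs_mul, abs_mul, abs_of_nonneg hγs]
        calc |C x (δ * s' + x)| * γ (-s') * |u (δ * s' + x) - u x|
            ≤ B₁ * γ (-s') * (L₁ * (δ * -s')) := by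
              apply mul_le_mul (mul_le_mul e1 le_rfl hγs hB₁pos.le) e2 (abs_nonneg _) ?_
              positivity
          _ = B₁ * L₁ * (-s' * γ (-s')) * δ := by ring
          _ ≤ B₁ * L₁ * (-s' * γ (-s')) * 1 := by
              apply mul_le_mul_of_nonneg_left hδ1
              exact mul_nonneg (mul_nonneg hB₁pos.le hL₁pos.le) (mul_nonneg hs'm.le hγs)
          _ = B₁ * L₁ * (-s' * γ (-s')) := mul_one _
    -- split and fold the interval integral
    have hIIp : IntervalIntegrable g volume 0 1 := by
      rw [intervalIntegrable_iff, Set.uIoc_of_le zero_le_one]; exact hbound1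
    have hIIm : IntervalIntegrable g volume (-1) 0 := by
      rw [intervalIntegrable_iff, Set.uIoc_of_le (by norm_num : (-1 : ℝ) ≤ 0)]; exact hbound2
    have hsplit := intervalIntegral.integral_add_adjacent_intervals hIIm hIIp
    have hnegint : (∫ s' in (0 : ℝ)..1, g (-s')) = ∫ s' in (-1 : ℝ)..0, g s' := by
      have h5 := intervalIntegral.integral_comp_neg (a := (0 : ℝ)) (b := 1) (f := g)
      simpa using h5
    have hIIn : IntervalIntegrable (fun s' => g (-s')) volume 0 1 := by
      have h6 := (IntervalIntegrable.iff_comp_neg (f := g) (a := -1) (b := 0)).1 hIIm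
      simpa using h6.symm
    have hadd := intervalIntegral.integral_add hIIn hIIp
    have hIoc : (∫ s' in (0 : ℝ)..1, (g (-s') + g s'))
        = ∫ s' in Set.Ioc (0 : ℝ) 1, (g (-s') + g s') :=
      intervalIntegral.integral_of_le zero_le_one
    have hcongr : (∫ s' in Set.Ioc (0 : ℝ) 1, (g (-s') + g s'))
        = ∫ s' in Set.Ioc (0 : ℝ) 1, γ s' * G (δ * s') := by
      apply setIntegral_congr_fun measurableSet_Ioc
      intro s' hs'
      simp only [hg, hG, abs_neg, abs_of_pos hs'.1]
      ring_nf
    have hY : (∫ y in (x - δ)..(x + δ), C x y * γ (|y - x| / δ) * (u y - u x))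
        = δ * ∫ s' in (-1 : ℝ)..1, g s' := by
      have e := h1.symm.trans h2
      rw [← e, smul_eq_mul, ← mul_assoc, mul_inv_cancel₀ hδ0.ne', one_mul]
    rw [hY, ← hsplit, ← hnegint,
      show (∫ s' in (0:ℝ)..1, g (-s')) + (∫ s' in (0:ℝ)..1, g s')
        = ∫ s' in (0:ℝ)..1, (g (-s') + g s') from hadd.symm,
      hIoc, hcongr, MeasureTheory.integral_const_mul]
    field_simp
  -- dominated convergence
  have hFmeas : ∀ᶠ δ in 𝓝[>] (0 : ℝ), AEStronglyMeasurable
      (fun s' => (δ ^ 2)⁻¹ * (γ s' * G (δ * s'))) (volume.restrict (Set.Ioc (0 : ℝ) 1)) := by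
    filter_upwards [Ioo_mem_nhdsGT hr0] with δ hδmem
    obtain ⟨hδ0, hδr⟩ := hδmem
    have hδε : δ < ε := lt_of_lt_of_le hδr hrε
    have c0 : Continuous (fun s' : ℝ => x + δ * s') :=
      continuous_const.add (continuous_const.mul continuous_id)
    have c0' : Continuous (fun s' : ℝ => x + -(δ * s')) :=
      continuous_const.add (continuous_const.mul continuous_id).neg
    have c1 : Continuous (fun s' : ℝ => C x (x + δ * s')) := hζcont.comp c0
    have c1' : Continuous (fun s' : ℝ => C x (x + -(δ * s'))) := hζcont.comp c0'
    have hmaps : ∀ c : ℝ, |c| ≤ 1 → ∀ s' ∈ Set.Icc (0:ℝ) 1, x + c * (δ * s') ∈ Set.Ioo (x - ε) (x + ε) := by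
      intro c hc s' hs'
      have h4 : |s'| ≤ 1 := abs_le.2 ⟨by linarith [hs'.1], hs'.2⟩
      have h3 : |c * (δ * s')| < ε := by
        rw [abs_mul, abs_mul, abs_of_pos hδ0]
        have h5 : |c| * (δ * |s'|) ≤ 1 * (δ * 1) := by
          apply mul_le_mul hc ?_ (by positivity) zero_le_one
          exact mul_le_mul_of_nonneg_left h4 hδ0.le
        nlinarith
      rw [abs_lt] at h3
      constructor
      · linarith [h3.1]
      · linarith [h3.2]
    have c2 : ContinuousOn (fun s' : ℝ => u (x + δ * s')) (Set.Icc (0 : ℝ) 1) := by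
      apply hucont.comp (continuous_const.add (continuous_const.mul continuous_id)).continuousOn
      intro s' hs'
      have := hmaps 1 (by norm_num) s' hs'
      simpa using this
    have c2' : ContinuousOn (fun s' : ℝ => u (x + -(δ * s'))) (Set.Icc (0 : ℝ) 1) := by
      apply hucont.comp (continuous_const.add (continuous_const.mul continuous_id).neg).continuousOn
      intro s' hs'
      have := hmaps (-1) (by norm_num) s' hs'
      simpa using this
    have hGc : ContinuousOn (fun s' : ℝ => G (δ * s')) (Set.Icc (0 : ℝ) 1) := by
      simp only [hG]
      exact (c1.continuousOn.mul (c2.sub continuousOn_const)).add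
        (c1'.continuousOn.mul (c2'.sub continuousOn_const))
    exact ((hγmeas.aestronglyMeasurable).mul
      ((hGc.mono Set.Ioc_subset_Icc_self).aestronglyMeasurable measurableSet_Ioc)).const_mul _
  have hbound : ∀ᶠ δ in 𝓝[>] (0 : ℝ), ∀ᵐ s' ∂(volume.restrict (Set.Ioc (0 : ℝ) 1)),
      ‖(δ ^ 2)⁻¹ * (γ s' * G (δ * s'))‖ ≤ K₀ * (s' * γ s') := by
    filter_upwards [Ioo_mem_nhdsGT hr0] with δ hδmem
    obtain ⟨hδ0, hδr⟩ := hδmem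
    rw [ae_restrict_iff' measurableSet_Ioc]
    apply ae_of_all
    intro s' hs'
    have hs'0 : 0 < s' := hs'.1
    have hγs : 0 ≤ γ s' := hγnonneg s' hs'
    have hδs : |δ * s'| < ρG := by
      rw [abs_mul, abs_of_pos hδ0, abs_of_pos hs'0]
      have h4 : δ * s' ≤ δ * 1 := mul_le_mul_of_nonneg_left hs'.2 hδ0.le
      have h5 := lt_of_lt_of_le hδr hrρG
      linarith
    have h1 := hGbd _ hδs
    rw [Real.norm_eq_abs, abs_mul, abs_mul, abs_of_nonneg hγs, abs_inv,
      abs_of_nonneg (sq_nonneg δ)]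
    calc (δ ^ 2)⁻¹ * (γ s' * |G (δ * s')|)
        ≤ (δ ^ 2)⁻¹ * (γ s' * (K₀ * (δ * s') ^ 2)) := by
          apply mul_le_mul_of_nonneg_left (mul_le_mul_of_nonneg_left h1 hγs) ?_
          positivity
      _ = K₀ * (s' ^ 2 * γ s') * (δ ^ 2 * (δ ^ 2)⁻¹) := by ring
      _ = K₀ * (s' ^ 2 * γ s') := by
          rw [mul_inv_cancel₀ (by positivity : (δ:ℝ) ^ 2 ≠ 0), mul_one]
      _ ≤ K₀ * (s' * γ s') := by
          have h9 : s' ^ 2 ≤ s' := by nlinarith [hs'.2, hs'0]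
          have h10 : s' ^ 2 * γ s' ≤ s' * γ s' := mul_le_mul_of_nonneg_right h9 hγs
          exact mul_le_mul_of_nonneg_left h10 hK₀nn
  have hlim : ∀ᵐ s' ∂(volume.restrict (Set.Ioc (0 : ℝ) 1)), Filter.Tendsto
      (fun δ : ℝ => (δ ^ 2)⁻¹ * (γ s' * G (δ * s'))) (𝓝[>] (0 : ℝ))
      (𝓝 (γ s' * (s' ^ 2 * A2))) := by
    rw [ae_restrict_iff' measurableSet_Ioc]
    exact ae_of_all _ hpt
  have hmain := tendsto_integral_filter_of_dominated_convergence
    (μ := volume.restrict (Set.Ioc (0 : ℝ) 1)) (F := fun δ s' => (δ ^ 2)⁻¹ * (γ s' * G (δ * s')))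
    (f := fun s' => γ s' * (s' ^ 2 * A2)) (fun s' => K₀ * (s' * γ s'))
    hFmeas hbound (hint.const_mul K₀) hlim
  have hIval : (∫ s' in Set.Ioc (0 : ℝ) 1, γ s' * (s' ^ 2 * A2))
      = (∫ s' in Set.Ioc (0 : ℝ) 1, s' ^ 2 * γ s') * A2 := by
    rw [← MeasureTheory.integral_mul_const]
    apply integral_congr_ae
    apply ae_of_all
    intro s'
    ring
  rw [hIval] at hmain
  have hgoal : (M / 2) * ((fun t => C t t) x * deriv (deriv u) x
      + deriv (fun t => C t t) x * deriv u x)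
      = (∫ s' in Set.Ioc (0 : ℝ) 1, s' ^ 2 * γ s') * A2 := by
    have hb : (fun t : ℝ => C t t) x = C x x := rfl
    rw [hb, hσd.deriv, hM, hA2def]; ring
  rw [hgoal]
  apply Filter.Tendsto.congr' _ hmain
  filter_upwards [Ioo_mem_nhdsGT hr0] with δ hδmem
  exact (key δ hδmem).symm
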